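/- The planar system a' = r, r' = a³/4 + a|r|/2 admits no nonconstant homoclinic trajectory to the origin, i.e., no nonconstant solution (a,r):ℝ→ℝ² with (a,r)(ξ) → (0,0) as ξ → ±∞. -/

import Mathlib

open Filter

/-- The planar system a' = r, r' = a³/4 + a|r|/2 has no nonconstant homoclinic
trajectory to the origin: any solution with (a,r) → (0,0) as ξ → ±∞ is
identically zero. -/
theorem stmt11 (a r : ℝ → ℝ)
    (ha : ∀ ξ, HasDerivAt a (r ξ) ξ)
    (hr : ∀ ξ, HasDerivAt r (a ξ ^ 3 / 4 + a ξ * |r ξ| / 2) ξ)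
    (htop : Tendsto (fun ξ => (a ξ, r ξ)) atTop (nhds (0, 0)))
    (hbot : Tendsto (fun ξ => (a ξ, r ξ)) atBot (nhds (0, 0))) :
    ∀ ξ, a ξ = 0 ∧ r ξ = 0 := by
  -- W = a * r is monotone since W' = r² + a⁴/4 + a²|r|/2 ≥ 0
  set W : ℝ → ℝ := fun ξ => a ξ * r ξ with hWdef
  have hW : ∀ ξ, HasDerivAt W
      (r ξ * r ξ + a ξ * (a ξ ^ 3 / 4 + a ξ * |r ξ| / 2)) ξ :=
    fun ξ => (ha ξ).mul (hr ξ)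
  have hW0 : ∀ ξ, 0 ≤ r ξ * r ξ + a ξ * (a ξ ^ 3 / 4 + a ξ * |r ξ| / 2) := by
    intro ξ
    nlinarith [abs_nonneg (r ξ), sq_nonneg (a ξ), sq_nonneg (r ξ),
      sq_nonneg (a ξ ^ 2), sq_nonneg (a ξ * |r ξ|)]
  have hmono : Monotone W := by
    apply monotone_of_deriv_nonneg
    · exact fun ξ => (hW ξ).differentiableAt
    · intro ξ
      rw [(hW ξ).deriv]
      exact hW0 ξ
  -- limits of W at ±∞ are 0
  have hmul : Tendsto (fun p : ℝ × ℝ => p.1 * p.2) (nhds ((0 : ℝ), (0 : ℝ)))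
      (nhds 0) := by
    have := (continuous_fst.mul continuous_snd).tendsto ((0 : ℝ), (0 : ℝ))
    convert this using 2
    all_goals simp [Pi.mul_apply]
  have hWtop : Tendsto W atTop (nhds 0) := hmul.comp htop
  have hWbot : Tendsto W atBot (nhds 0) := hmul.comp hbot
  -- hence W ≡ 0
  have hWeq : ∀ ξ, W ξ = 0 := by
    intro ξ
    have h1 : W ξ ≤ 0 := by
      apply ge_of_tendsto hWtop
      filter_upwards [eventually_ge_atTop ξ] with t ht
      exact hmono ht
    have h2 : 0 ≤ W ξ := by
      apply le_of_tendsto hWbot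
      filter_upwards [eventually_le_atBot ξ] with t ht
      exact hmono ht
    linarith
  -- so W' ≡ 0, forcing a = r = 0 pointwise
  intro ξ
  have hWconst : HasDerivAt W 0 ξ := by
    have : W = fun _ => (0 : ℝ) := funext hWeq
    rw [this]
    exact hasDerivAt_const ξ 0
  have hZ : r ξ * r ξ + a ξ * (a ξ ^ 3 / 4 + a ξ * |r ξ| / 2) = 0 :=
    (hW ξ).unique hWconst
  have hrr : 0 ≤ r ξ * r ξ := mul_self_nonneg _
  have h4 : 0 ≤ a ξ ^ 4 := by positivity
  have h5 : 0 ≤ a ξ ^ 2 * |r ξ| := mul_nonneg (sq_nonneg _) (abs_nonneg _)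
  constructor
  · have : a ξ ^ 4 = 0 := by nlinarith
    exact pow_eq_zero_iff (by norm_num) |>.mp this
  · have : r ξ * r ξ = 0 := by nlinarith
    exact mul_self_eq_zero.mp this
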